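/- Consider the steady-state system 0 = α₁x₄ − δ_V x₁, 0 = α_C x₂(1 − (x₂+x₃+x₄)/K) − γ₁x₂x₁ − δ_C x₂, 0 = γ₁x₂x₁ − ν₁x₃ − δ_{CV}x₃, 0 = ν₁x₃ − β₁x₄ with positive parameters and Z = δ_V β₁(δ_{CV}+ν₁)/(γ₁α₁ν₁). If δ_C < α_C(1 − Z/K), then there exist exactly three non-negative solutions: (0,0,0,0), (0, K(α_C−δ_C)/α_C, 0, 0), and (V̄, Z, C̄_V, C̄*_V) where C̄_V = Z(α_C(1 − Z/K) − δ_C)/(ν₁ + δ_{CV} + (β₁+ν₁)α_C Z/(β₁K)), C̄*_V = (ν₁/β₁)C̄_V, and V̄ = (α₁ν₁/(δ_V β₁))C̄_V. -/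

import Mathlib

set_option maxHeartbeats 1000000 in
theorem stmt_2 (α₁ δV αC K γ₁ δC ν₁ δCV β₁ : ℝ)
    (hα₁ : 0 < α₁) (hδV : 0 < δV) (hαC : 0 < αC) (hK : 0 < K) (hγ₁ : 0 < γ₁)
    (hδC : 0 < δC) (hν₁ : 0 < ν₁) (hδCV : 0 < δCV) (hβ₁ : 0 < β₁)
    (Z : ℝ) (hZ : Z = δV * β₁ * (δCV + ν₁) / (γ₁ * α₁ * ν₁))
    (hcond : δC < αC * (1 - Z / K))
    (CV CVs Vb : ℝ)
    (hCV : CV = Z * (αC * (1 - Z / K) - δC) / (ν₁ + δCV + (β₁ + ν₁) * αC * Z / (β₁ * K)))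
    (hCVs : CVs = (ν₁ / β₁) * CV)
    (hVb : Vb = (α₁ * ν₁ / (δV * β₁)) * CV) :
    {p : ℝ × ℝ × ℝ × ℝ |
        0 ≤ p.1 ∧ 0 ≤ p.2.1 ∧ 0 ≤ p.2.2.1 ∧ 0 ≤ p.2.2.2 ∧
        0 = α₁ * p.2.2.2 - δV * p.1 ∧
        0 = αC * p.2.1 * (1 - (p.2.1 + p.2.2.1 + p.2.2.2) / K) - γ₁ * p.2.1 * p.1 - δC * p.2.1 ∧
        0 = γ₁ * p.2.1 * p.1 - ν₁ * p.2.2.1 - δCV * p.2.2.1 ∧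
        0 = ν₁ * p.2.2.1 - β₁ * p.2.2.2} =
      {(0, 0, 0, 0), (0, K * (αC - δC) / αC, 0, 0), (Vb, Z, CV, CVs)} := by
  have hKne : K ≠ 0 := hK.ne'
  have hZpos : 0 < Z := by rw [hZ]; positivity
  have hZK : Z < K := by
    by_contra h
    push_neg at h
    have h1 : (1 : ℝ) ≤ Z / K := (le_div_iff₀ hK).2 (by linarith)
    nlinarith
  have hZc : Z * (γ₁ * α₁ * ν₁) = δV * β₁ * (δCV + ν₁) := by
    rw [hZ]; field_simp
  have hdenpos : 0 < (ν₁ + δCV) * (β₁ * K) + (β₁ + ν₁) * αC * Z := by positivity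
  have hCVc : CV * ((ν₁ + δCV) * (β₁ * K) + (β₁ + ν₁) * αC * Z)
      = Z * β₁ * (αC * (K - Z) - δC * K) := by
    rw [hCV]
    have h2 : ν₁ + δCV + (β₁ + ν₁) * αC * Z / (β₁ * K) ≠ 0 := by positivity
    field_simp
  have hnum : 0 < Z * β₁ * (αC * (K - Z) - δC * K) := by
    have h1 : δC * K < αC * (K - Z) := by
      have h2 : αC * (1 - Z / K) * K = αC * (K - Z) := by field_simp
      nlinarith [hcond, hK]
    exact mul_pos (mul_pos hZpos hβ₁) (by linarith)
  have hCVpos : 0 < CV := by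
    have hmul : 0 < CV * ((ν₁ + δCV) * (β₁ * K) + (β₁ + ν₁) * αC * Z) := by
      rw [hCVc]; exact hnum
    by_contra h
    push_neg at h
    nlinarith [hmul, hdenpos]
  have hCVspos : 0 < CVs := by rw [hCVs]; positivity
  have hVbpos : 0 < Vb := by rw [hVb]; positivity
  ext ⟨x1, x2, x3, x4⟩
  simp only [Set.mem_setOf_eq, Set.mem_insert_iff, Set.mem_singleton_iff, Prod.mk.injEq]
  constructor
  · rintro ⟨h1, h2, h3, h4, e1, e2, e3, e4⟩
    by_cases hx2 : x2 = 0
    · left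
      have hx3 : x3 = 0 := by
        have h30 : (ν₁ + δCV) * x3 = 0 := by
          have := e3; rw [hx2] at this
          linear_combination this
        rcases mul_eq_zero.1 h30 with h | h
        · linarith
        · exact h
      have hx4 : x4 = 0 := by
        have h40 : β₁ * x4 = 0 := by
          have := e4; rw [hx3] at this; linear_combination this
        exact (mul_eq_zero.1 h40).resolve_left hβ₁.ne'
      have hx1 : x1 = 0 := by
        have h10 : δV * x1 = 0 := by
          have := e1; rw [hx4] at this; linear_combination this
        exact (mul_eq_zero.1 h10).resolve_left hδV.ne'
      exact ⟨hx1, hx2, hx3, hx4⟩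
    · by_cases hx3 : x3 = 0
      · right; left
        have hx4 : x4 = 0 := by
          have h40 : β₁ * x4 = 0 := by
            have := e4; rw [hx3] at this; linear_combination this
          exact (mul_eq_zero.1 h40).resolve_left hβ₁.ne'
        have hx1 : x1 = 0 := by
          have h10 : δV * x1 = 0 := by
            have := e1; rw [hx4] at this; linear_combination this
          exact (mul_eq_zero.1 h10).resolve_left hδV.ne'
        refine ⟨hx1, ?_, hx3, hx4⟩
        rw [hx1, hx3, hx4] at e2
        have hfac : αC * x2 * (1 - (x2 + 0 + 0) / K) - γ₁ * x2 * 0 - δC * x2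
            = x2 * ((αC * (K - x2) - δC * K) / K) := by field_simp; ring
        rw [hfac] at e2
        have h20 := (mul_eq_zero.1 e2.symm).resolve_left hx2
        have h21 : αC * (K - x2) - δC * K = 0 := by
          field_simp at h20
          linarith
        field_simp
        linarith
      · right; right
        have hx3p : 0 < x3 := lt_of_le_of_ne h3 (Ne.symm hx3)
        have hβx4 : β₁ * x4 = ν₁ * x3 := by linarith
        have hδx1 : δV * x1 = α₁ * x4 := by linarith
        have key2 : γ₁ * α₁ * ν₁ * x2 * x3 = δV * β₁ * (δCV + ν₁) * x3 := by
          linear_combination (-(δV * β₁)) * e3 - (γ₁ * x2 * β₁) * hδx1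
            - (γ₁ * x2 * α₁) * hβx4
        have h5 : γ₁ * α₁ * ν₁ * x2 = δV * β₁ * (δCV + ν₁) :=
          mul_right_cancel₀ hx3 key2
        have hx2Z : x2 = Z := by
          have h6 : γ₁ * α₁ * ν₁ * (x2 - Z) = 0 := by linear_combination h5 - hZc
          have h7 := (mul_eq_zero.1 h6).resolve_left (by positivity)
          linarith
        rw [hx2Z] at e2 e3
        have hfac : αC * Z * (1 - (Z + x3 + x4) / K) - γ₁ * Z * x1 - δC * Z
            = Z * ((αC * (K - (Z + x3 + x4)) - γ₁ * x1 * K - δC * K) / K) := by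
          field_simp
        rw [hfac] at e2
        have h20 := (mul_eq_zero.1 e2.symm).resolve_left hZpos.ne'
        have e2' : αC * (K - (Z + x3 + x4)) - γ₁ * x1 * K - δC * K = 0 := by
          field_simp at h20
          linarith
        have e3' : γ₁ * Z * x1 = (ν₁ + δCV) * x3 := by linarith
        have key3 : x3 * ((ν₁ + δCV) * (β₁ * K) + (β₁ + ν₁) * αC * Z)
            = Z * β₁ * (αC * (K - Z) - δC * K) := by
          linear_combination (-(Z * β₁)) * e2' - (β₁ * K) * e3' - (Z * αC) * hβx4
        have hx3CV : x3 = CV :=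
          mul_right_cancel₀ hdenpos.ne' (key3.trans hCVc.symm)
        have hx4CVs : x4 = CVs := by
          rw [hCVs, ← hx3CV]
          field_simp
          linarith
        have hx1Vb : x1 = Vb := by
          rw [hVb, ← hx3CV]
          have h8 : δV * β₁ * x1 = α₁ * ν₁ * x3 := by
            linear_combination β₁ * hδx1 + α₁ * hβx4
          field_simp
          linarith
        exact ⟨hx1Vb, hx2Z, hx3CV, hx4CVs⟩
  · rintro (⟨q1, q2, q3, q4⟩ | ⟨q1, q2, q3, q4⟩ | ⟨q1, q2, q3, q4⟩)
    · subst q1 q2 q3 q4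
      refine ⟨le_refl 0, le_refl 0, le_refl 0, le_refl 0, by ring, by ring, by ring, by ring⟩
    · subst q1 q2 q3 q4
      have hαCδC : δC < αC := by
        nlinarith [mul_pos hαC (div_pos hZpos hK)]
      refine ⟨le_refl 0, div_nonneg (by nlinarith) hαC.le, le_refl 0, le_refl 0,
        by ring, ?_, by ring, by ring⟩
      field_simp
      ring
    · rw [q1, q2, q3, q4]
      refine ⟨hVbpos.le, hZpos.le, hCVpos.le, hCVspos.le, ?_, ?_, ?_, ?_⟩
      · rw [hCVs, hVb]; field_simp; ring
      · rw [hCVs, hVb]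
        have expand : (αC * Z * (1 - (Z + CV + ν₁ / β₁ * CV) / K)
            - γ₁ * Z * (α₁ * ν₁ / (δV * β₁) * CV) - δC * Z) * (δV * β₁ * β₁ * K)
            = (Z * β₁ * (αC * (K - Z) - δC * K)
              - CV * ((ν₁ + δCV) * (β₁ * K) + (β₁ + ν₁) * αC * Z)) * (δV * β₁)
              + (δV * β₁ * (δCV + ν₁) - Z * (γ₁ * α₁ * ν₁)) * (CV * β₁ * K) := by
          field_simp
          ring
        have h0 : (αC * Z * (1 - (Z + CV + ν₁ / β₁ * CV) / K)
            - γ₁ * Z * (α₁ * ν₁ / (δV * β₁) * CV) - δC * Z) * (δV * β₁ * β₁ * K) = 0 := by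
          rw [expand, hCVc, hZc]; ring
        have hne : δV * β₁ * β₁ * K ≠ 0 := by positivity
        have := (mul_eq_zero.1 h0).resolve_right hne
        linarith
      · rw [hVb]
        have h9 : γ₁ * Z * (α₁ * ν₁ / (δV * β₁) * CV) - ν₁ * CV - δCV * CV
            = (Z * (γ₁ * α₁ * ν₁) - δV * β₁ * (δCV + ν₁)) * CV / (δV * β₁) := by
          field_simp; ring
        rw [h9, hZc]; ring
      · rw [hCVs]; field_simp; ring
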